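/- Let p be an odd prime, n ≥ 1, e ∈ 𝒞 a corner of 𝔽_p^n, and T ∈ 𝒯_e with associated permutation τ. Let e^τ denote the corner with (e^τ)_{τ(i)} = e_i for all i. Then the inverse transformation satisfies T^{-1} ∈ 𝒯_{e^τ}. -/

import Mathlib

/-- The vector `d = (-1,…,-1) ∈ 𝔽_p^n`. -/
def dVec (p n : ℕ) : Fin n → ZMod p := fun _ => -1

/-- The opposite point `x^⊥ = d - x`. -/
def perp (p n : ℕ) (x : Fin n → ZMod p) : Fin n → ZMod p := dVec p n - x

/-- The standard unit vector `e_i`. -/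
def stdBasis (p n : ℕ) (i : Fin n) : Fin n → ZMod p := fun j => if j = i then 1 else 0

/-- A corner of `𝔽_p^n`: all entries in `{0, -1}`. -/
def CornerVec (p n : ℕ) (x : Fin n → ZMod p) : Prop := ∀ i, x i = 0 ∨ x i = -1

/-- Membership in `𝒯_e`: affine bijections with `T(e) = 0`, `T(e^⊥) = d`,
mapping corners bijectively onto corners, and moving unit-vector differences to
signed unit-vector differences via a fixed coordinate permutation. -/
def MemT (p n : ℕ) (e : Fin n → ZMod p) (T : (Fin n → ZMod p) → (Fin n → ZMod p)) : Prop :=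
  (∃ (Λ : (Fin n → ZMod p) ≃ₗ[ZMod p] (Fin n → ZMod p)) (c : Fin n → ZMod p),
      ∀ x, T x = Λ x + c) ∧
  T e = 0 ∧
  T (perp p n e) = dVec p n ∧
  Set.BijOn T {x | CornerVec p n x} {x | CornerVec p n x} ∧
  ∃ τ : Equiv.Perm (Fin n), ∀ (i : Fin n) (x y : Fin n → ZMod p),
    x - y = stdBasis p n i →
      T x - T y = stdBasis p n (τ i) ∨ T x - T y = -stdBasis p n (τ i)

lemma stdBasis_decomp (p n : ℕ) (x : Fin n → ZMod p) :
    x = ∑ i, x i • stdBasis p n i := by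
  funext j
  simp [Finset.sum_apply, stdBasis, mul_ite, Finset.sum_ite_eq]

lemma sum_smul_std_perm (p n : ℕ) (τ : Equiv.Perm (Fin n)) (f : Fin n → ZMod p) :
    (∑ i, f i • stdBasis p n (τ i)) = fun j => f (τ⁻¹ j) := by
  funext j
  rw [Finset.sum_apply, ← Equiv.sum_comp (τ⁻¹ : Equiv.Perm (Fin n))
    (fun i => (f i • stdBasis p n (τ i)) j)]
  simp [stdBasis, mul_ite, Finset.sum_ite_eq]


/-- if `T ∈ 𝒯_e` has associated permutation `τ`, then `T⁻¹ ∈ 𝒯_{e^τ}`,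
where `(e^τ)_{τ(i)} = e_i`, i.e. `e^τ = e ∘ τ⁻¹`. -/
theorem memT_inverse (p n : ℕ) (hp : p.Prime) (hodd : Odd p) (hn : 1 ≤ n)
    (e : Fin n → ZMod p) (he : CornerVec p n e)
    (T Tinv : (Fin n → ZMod p) → (Fin n → ZMod p)) (hT : MemT p n e T)
    (A : (Fin n → ZMod p) ≃ₗ[ZMod p] (Fin n → ZMod p)) (τ : Equiv.Perm (Fin n))
    (hA : ∀ x, T x = A (x - e))
    (hτ : ∀ i : Fin n,
      (e i = -1 → A (stdBasis p n i) = -stdBasis p n (τ i)) ∧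
      (e i = 0 → A (stdBasis p n i) = stdBasis p n (τ i)))
    (hTinv₁ : Function.LeftInverse Tinv T) (hTinv₂ : Function.RightInverse Tinv T) :
    MemT p n (fun j => e (τ⁻¹ j)) Tinv := by
  set e' : Fin n → ZMod p := fun j => e (τ⁻¹ j) with he'
  have hAsum : ∀ c : Fin n → ZMod p, A c = ∑ i, c i • A (stdBasis p n i) := by
    intro c
    conv_lhs => rw [stdBasis_decomp p n c]
    simp [map_sum, map_smul]
  have hAe : A e = -e' := by
    rw [hAsum e]
    have hterm : ∀ i ∈ Finset.univ, e i • A (stdBasis p n i)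
        = (-e) i • stdBasis p n (τ i) := by
      intro i _
      rcases he i with h | h
      · simp [h]
      · rw [(hτ i).1 h]; simp [h]
    rw [Finset.sum_congr rfl hterm, sum_smul_std_perm p n τ (-e)]
    funext j
    simp [he']
  have hAde : A (dVec p n - e) = dVec p n - e' := by
    rw [hAsum]
    have hterm : ∀ i ∈ Finset.univ, (dVec p n - e) i • A (stdBasis p n i)
        = (-1 - e i) • stdBasis p n (τ i) := by
      intro i _
      rcases he i with h | h
      · rw [(hτ i).2 h]; simp [dVec]
      · rw [(hτ i).1 h]; simp [dVec, h]
    rw [Finset.sum_congr rfl hterm, sum_smul_std_perm]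
    funext j
    simp [dVec, he']
  have hTinvEq : ∀ y, Tinv y = A.symm y + e := by
    intro y
    have h1 : T (A.symm y + e) = y := by rw [hA]; simp
    calc Tinv y = Tinv (T (A.symm y + e)) := by rw [h1]
      _ = A.symm y + e := hTinv₁ _
  obtain ⟨-, -, -, hBij, -⟩ := hT
  refine ⟨⟨A.symm, e, hTinvEq⟩, ?_, ?_, ?_, τ⁻¹, ?_⟩
  · rw [hTinvEq]
    have : A.symm e' = -e := by
      rw [LinearEquiv.symm_apply_eq, map_neg, hAe, neg_neg]
    rw [this, neg_add_cancel]
  · rw [hTinvEq]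
    have : A.symm (perp p n e') = dVec p n - e := by
      rw [LinearEquiv.symm_apply_eq, hAde]
      rfl
    rw [this]
    show dVec p n - e + e = dVec p n
    ring
  · exact Set.BijOn.symm ⟨fun x _ => hTinv₂ x, fun x _ => hTinv₁ x⟩ hBij
  · intro i x y hxy
    have hd : Tinv x - Tinv y = A.symm (stdBasis p n i) := by
      rw [hTinvEq, hTinvEq, ← hxy, map_sub]
      ring
    rcases he (τ⁻¹ i) with h | h
    · left
      have h2 := (hτ (τ⁻¹ i)).2 h
      rw [show τ (τ⁻¹ i) = i from τ.apply_symm_apply i] at h2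
      rw [hd, ← h2, LinearEquiv.symm_apply_apply]
    · right
      have h2 := (hτ (τ⁻¹ i)).1 h
      rw [show τ (τ⁻¹ i) = i from τ.apply_symm_apply i] at h2
      rw [hd, ← neg_neg (stdBasis p n i), ← h2, map_neg, LinearEquiv.symm_apply_apply]
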